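/- Assume: for every r ∈ ℕ there exists N ∈ ℕ such that for any r-coloring χ of finite subsets of ℕ×ℕ there are a nonempty γ ⊆ {1,…,N} and finite a with a ∩ (γ×γ) = ∅ and χ(a) = χ(a ∪ (γ×γ)). Then for every finite coloring of ℕ there exist x, y ∈ ℕ of the same color and n ∈ ℕ, n ≥ 1, with x − y = n². -/
import Mathlib


/-- Remark after Proposition Q: the chromatic "single square" statement implies that for
every finite coloring of `ℕ` there are monochromatic `x, y` with `x - y = n²`, `n ≥ 1`. -/
theorem square_difference_monochromatic
    (H : ∀ r : ℕ, ∃ N : ℕ, ∀ χ : Finset (ℕ × ℕ) → Fin r,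
      ∃ γ : Finset ℕ, γ.Nonempty ∧ γ ⊆ Finset.Icc 1 N ∧
        ∃ a : Finset (ℕ × ℕ), Disjoint a (γ ×ˢ γ) ∧ χ a = χ (a ∪ γ ×ˢ γ)) :
    ∀ (r : ℕ) (χ : ℕ → Fin r), ∃ x y n : ℕ, 1 ≤ n ∧ χ x = χ y ∧ x = y + n ^ 2 := by
  intro r χ
  obtain ⟨N, hN⟩ := H r
  obtain ⟨γ, hγne, -, a, hdisj, hχ⟩ := hN (fun s => χ s.card)
  refine ⟨(a ∪ γ ×ˢ γ).card, a.card, γ.card, hγne.card_pos, hχ.symm, ?_⟩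
  rw [Finset.card_union_of_disjoint hdisj, Finset.card_product, sq]
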